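/- Fix λ = 1/2 and d ≥ 1. Suppose S is a joint distribution on [0,1]^d with each coordinate marginally uniform on [0,1], and D is a joint distribution on [-1/2,1/2]^d with each coordinate marginally uniform on [-1/2,1/2], such that for every x ∈ [0,1]^d, the SSN output x̃ (with x̃ᵢ = (sᵢ + 1_{xᵢ>sᵢ})/2, s ~ S) has the same distribution as (x+ε)/2 + 𝟙/4 with ε ~ D. Then S is the product uniform distribution U^d(0,1) and D is the product uniform distribution U^d(-1/2,1/2). -/

import Mathlib

open MeasureTheory Set
open scoped ENNReal

/-- Uniform probability measure on the interval `[a,b]`. -/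
noncomputable def unif (a b : ℝ) : Measure ℝ :=
  (ENNReal.ofReal (b - a))⁻¹ • volume.restrict (Icc a b)

lemma unif_apply (a b : ℝ) (s : Set ℝ) :
    unif a b s = (ENNReal.ofReal (b - a))⁻¹ * volume (s ∩ Icc a b) := by
  simp [unif, Measure.restrict_apply' measurableSet_Icc]

instance unif_finite (a b : ℝ) : IsFiniteMeasure (unif a b) := by
  constructor
  rw [unif_apply]
  rcases le_or_gt b a with h | h
  · have h0 : volume (univ ∩ Icc a b) = 0 := by
      refine le_antisymm ?_ (by simp)
      calc volume (univ ∩ Icc a b) ≤ volume (Icc a b) := measure_mono (by simp)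
        _ = ENNReal.ofReal (b - a) := by rw [Real.volume_Icc]
        _ = 0 := by simp [sub_nonpos.mpr h]
    rw [h0, mul_zero]
    exact ENNReal.zero_lt_top
  · refine ENNReal.mul_lt_top ?_ ?_
    · simp [ENNReal.inv_lt_top, sub_pos.mpr h]
    · refine lt_of_le_of_lt (measure_mono (inter_subset_right)) ?_
      rw [Real.volume_Icc]; exact ENNReal.ofReal_lt_top

lemma unif_singleton (a b c : ℝ) : unif a b {c} = 0 := by
  rw [unif_apply]
  have : volume ({c} ∩ Icc a b) = 0 := by
    refine le_antisymm ?_ (by simp)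
    calc volume ({c} ∩ Icc a b) ≤ volume {c} := measure_mono (by simp)
      _ = 0 := Real.volume_singleton
  simp [this]

lemma unif_compl_Ioo (a b : ℝ) (hab : a ≤ b) : unif a b (Ioo a b)ᶜ = 0 := by
  rw [unif_apply]
  have h1 : (Ioo a b)ᶜ ∩ Icc a b = {a} ∪ {b} := by
    ext x
    simp only [mem_inter_iff, mem_compl_iff, mem_Ioo, mem_Icc, mem_union, mem_singleton_iff]
    constructor
    · rintro ⟨h2, h3, h4⟩
      by_contra h5
      push_neg at h5
      exact h2 ⟨lt_of_le_of_ne h3 (Ne.symm h5.1), lt_of_le_of_ne h4 h5.2⟩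
    · rintro (rfl | rfl) <;> simp [hab]
  have h2 : volume ({a} ∪ {b} : Set ℝ) = 0 := by
    refine le_antisymm (le_trans (measure_union_le _ _) ?_) (by simp)
    simp [Real.volume_singleton]
  rw [h1, h2, mul_zero]

section Marg

variable {d : ℕ}

lemma marg_null (μ : Measure (Fin d → ℝ)) (ν : Measure ℝ) (i : Fin d)
    (hm : μ.map (fun s => s i) = ν) {E : Set ℝ} (hE : MeasurableSet E) (hν : ν E = 0) :
    μ {s | s i ∈ E} = 0 := by
  have h := Measure.map_apply (measurable_pi_apply i) hE (μ := μ)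
  rw [hm] at h
  exact h ▸ hν

lemma slice_null (μ : Measure (Fin d → ℝ)) (a b : ℝ) (hmarg : ∀ i, μ.map (fun s => s i) = unif a b)
    (i : Fin d) (c : ℝ) : μ {s | s i = c} = 0 := by
  have := marg_null μ (unif a b) i (hmarg i) (measurableSet_singleton c) (unif_singleton a b c)
  simpa using this

lemma ae_mem_Ioo (μ : Measure (Fin d → ℝ)) (a b : ℝ) (hab : a ≤ b)
    (hmarg : ∀ i, μ.map (fun s => s i) = unif a b) :
    ∀ᵐ s ∂μ, ∀ i, s i ∈ Ioo a b := by
  rw [MeasureTheory.ae_all_iff]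
  intro i
  rw [ae_iff]
  have : {s : Fin d → ℝ | ¬ s i ∈ Ioo a b} = {s | s i ∈ (Ioo a b)ᶜ} := rfl
  rw [this]
  exact marg_null μ (unif a b) i (hmarg i) measurableSet_Ioo.compl (unif_compl_Ioo a b hab)

end Marg

section Key

variable {d : ℕ}

lemma measurable_fmap (x : Fin d → ℝ) :
    Measurable (fun s : Fin d → ℝ => fun i => (s i + (if s i < x i then (1:ℝ) else 0)) / 2) := by
  refine measurable_pi_lambda _ (fun i => ?_)
  have h1 : Measurable fun s : Fin d → ℝ => (if s i < x i then (1:ℝ) else 0) :=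
    Measurable.ite (measurableSet_lt (measurable_pi_apply i) measurable_const)
      measurable_const measurable_const
  exact ((measurable_pi_apply i).add h1).div_const 2

lemma measurable_gmap (x : Fin d → ℝ) :
    Measurable (fun e : Fin d → ℝ => fun i => (x i + e i) / 2 + 1/4) := by
  refine measurable_pi_lambda _ (fun i => ?_)
  exact ((measurable_const.add (measurable_pi_apply i)).div_const 2).add measurable_const

lemma key (S D : Measure (Fin d → ℝ))
    (hSae : ∀ᵐ s ∂S, ∀ i, s i ∈ Ioo (0:ℝ) 1)
    (hequiv : ∀ x : Fin d → ℝ, (∀ i, x i ∈ Icc (0:ℝ) 1) →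
      S.map (fun s => fun i => (s i + (if s i < x i then (1:ℝ) else 0)) / 2) =
        D.map (fun e => fun i => (x i + e i) / 2 + 1/4))
    (a b t : Fin d → ℝ) (ha : ∀ i, 0 ≤ a i) (hab : ∀ i, a i ≤ b i) (hb : ∀ i, b i ≤ 1)
    (hat : ∀ i, 0 ≤ a i + t i) (hbt : ∀ i, b i + t i ≤ 1) :
    S (univ.pi fun i => Ioo (a i) (b i)) =
      D (univ.pi fun i => Ioo (a i + t i - 1/2) (b i + t i - 1/2)) := by
  set x : Fin d → ℝ := fun i => if t i ≤ 0 then -t i else 1 - t i with hxdef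
  have hx01 : ∀ i, x i ∈ Icc (0:ℝ) 1 := by
    intro i
    have h1 := ha i; have h2 := hab i; have h3 := hb i; have h4 := hat i; have h5 := hbt i
    simp only [hxdef, mem_Icc]
    split_ifs with h
    · constructor <;> linarith
    · push_neg at h
      constructor <;> linarith
  set A : Fin d → Set ℝ := fun i =>
    if t i ≤ 0 then Ioo (a i / 2) (b i / 2) else Ioo ((a i + 1)/2) ((b i + 1)/2) with hAdef
  have hA : ∀ i, MeasurableSet (A i) := by
    intro i
    simp only [hAdef]
    split_ifs <;> exact measurableSet_Ioo
  have hAbox : MeasurableSet (univ.pi A) := MeasurableSet.univ_pi hA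
  have hgpre : (fun e : Fin d → ℝ => fun i => (x i + e i) / 2 + 1/4) ⁻¹' (univ.pi A) =
      univ.pi fun i => Ioo (a i + t i - 1/2) (b i + t i - 1/2) := by
    ext e
    simp only [mem_preimage, mem_pi, mem_univ, true_implies]
    refine forall_congr' fun i => ?_
    simp only [hAdef, hxdef, mem_Ioo]
    split_ifs with h
    · constructor
      · rintro ⟨h1, h2⟩; constructor <;> linarith
      · rintro ⟨h1, h2⟩; constructor <;> linarith
    · constructor
      · rintro ⟨h1, h2⟩; constructor <;> linarith
      · rintro ⟨h1, h2⟩; constructor <;> linarith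
  have hfae : ((fun s : Fin d → ℝ => fun i => (s i + (if s i < x i then (1:ℝ) else 0)) / 2) ⁻¹'
      (univ.pi A)) =ᵐ[S] (univ.pi fun i => Ioo (a i) (b i)) := by
    filter_upwards [hSae] with s hs
    refine eq_iff_iff.mpr ?_
    show (fun i => (s i + (if s i < x i then (1:ℝ) else 0)) / 2) ∈ univ.pi A ↔ _
    simp only [mem_pi, mem_univ, true_implies]
    refine forall_congr' fun i => ?_
    simp only [mem_univ, true_implies]
    have h1 := ha i; have h2 := hab i; have h3 := hb i; have h4 := hat i; have h5 := hbt i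
    have h6 := (hs i).1; have h7 := (hs i).2
    by_cases h : t i ≤ 0
    · have hxi : x i = -t i := by simp [hxdef, h]
      have hAi : A i = Ioo (a i / 2) (b i / 2) := by simp [hAdef, h]
      rw [hAi]
      by_cases h' : s i < x i
      · rw [if_pos h', hxi] at *
        simp only [mem_Ioo]
        constructor
        · rintro ⟨h8, h9⟩; exfalso; linarith
        · rintro ⟨h8, h9⟩; exfalso; linarith
      · rw [if_neg h', hxi] at *
        push_neg at h'
        simp only [mem_Ioo]
        constructor
        · rintro ⟨h8, h9⟩; constructor <;> linarith
        · rintro ⟨h8, h9⟩; constructor <;> linarith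
    · push_neg at h
      have hxi : x i = 1 - t i := by simp [hxdef, not_le.mpr h]
      have hAi : A i = Ioo ((a i + 1) / 2) ((b i + 1) / 2) := by simp [hAdef, not_le.mpr h]
      rw [hAi]
      by_cases h' : s i < x i
      · rw [if_pos h', hxi] at *
        simp only [mem_Ioo]
        constructor
        · rintro ⟨h8, h9⟩; constructor <;> linarith
        · rintro ⟨h8, h9⟩; constructor <;> linarith
      · rw [if_neg h', hxi] at *
        push_neg at h'
        simp only [mem_Ioo]
        constructor
        · rintro ⟨h8, h9⟩; exfalso; linarith
        · rintro ⟨h8, h9⟩; exfalso; linarith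
  calc S (univ.pi fun i => Ioo (a i) (b i))
      = S ((fun s : Fin d → ℝ => fun i => (s i + (if s i < x i then (1:ℝ) else 0)) / 2) ⁻¹'
          (univ.pi A)) := (measure_congr hfae).symm
    _ = S.map (fun s : Fin d → ℝ => fun i => (s i + (if s i < x i then (1:ℝ) else 0)) / 2)
          (univ.pi A) := (Measure.map_apply (measurable_fmap x) hAbox).symm
    _ = D.map (fun e : Fin d → ℝ => fun i => (x i + e i) / 2 + 1/4) (univ.pi A) := by
          rw [hequiv x hx01]
    _ = D ((fun e : Fin d → ℝ => fun i => (x i + e i) / 2 + 1/4) ⁻¹' (univ.pi A)) :=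
          Measure.map_apply (measurable_gmap x) hAbox
    _ = D (univ.pi fun i => Ioo (a i + t i - 1/2) (b i + t i - 1/2)) := by rw [hgpre]

end Key

section Boxes

variable {d : ℕ}

lemma shift (S D : Measure (Fin d → ℝ))
    (hSae : ∀ᵐ s ∂S, ∀ i, s i ∈ Ioo (0:ℝ) 1)
    (hequiv : ∀ x : Fin d → ℝ, (∀ i, x i ∈ Icc (0:ℝ) 1) →
      S.map (fun s => fun i => (s i + (if s i < x i then (1:ℝ) else 0)) / 2) =
        D.map (fun e => fun i => (x i + e i) / 2 + 1/4))
    (a b t : Fin d → ℝ) (ha : ∀ i, 0 ≤ a i) (hab : ∀ i, a i ≤ b i) (hb : ∀ i, b i ≤ 1)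
    (hat : ∀ i, 0 ≤ a i + t i) (hbt : ∀ i, b i + t i ≤ 1) :
    S (univ.pi fun i => Ioo (a i) (b i)) = S (univ.pi fun i => Ioo (a i + t i) (b i + t i)) := by
  have h1 := key S D hSae hequiv a b t ha hab hb hat hbt
  have h2 := key S D hSae hequiv (fun i => a i + t i) (fun i => b i + t i) (fun _ => 0)
    hat (fun i => by have := hab i; linarith) hbt
    (fun i => by have := hat i; linarith) (fun i => by have := hbt i; linarith)
  simp only [add_zero] at h2
  rw [h1, h2]

end Boxes

section Scale

variable {d : ℕ}

lemma update_Ioo (α β : Fin d → ℝ) (k : Fin d) (u v : ℝ) :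
    Function.update (fun j => Ioo (α j) (β j)) k (Ioo u v) =
      fun j => Ioo (Function.update α k u j) (Function.update β k v j) := by
  funext j
  rcases eq_or_ne j k with rfl | hj
  · simp
  · simp [Function.update_of_ne hj]

lemma scale_coord (S D : Measure (Fin d → ℝ))
    (hSae : ∀ᵐ s ∂S, ∀ i, s i ∈ Ioo (0:ℝ) 1)
    (hslice : ∀ (i : Fin d) (c : ℝ), S {s | s i = c} = 0)
    (hequiv : ∀ x : Fin d → ℝ, (∀ i, x i ∈ Icc (0:ℝ) 1) →
      S.map (fun s => fun i => (s i + (if s i < x i then (1:ℝ) else 0)) / 2) =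
        D.map (fun e => fun i => (x i + e i) / 2 + 1/4))
    (α β : Fin d → ℝ) (hα : ∀ j, 0 ≤ α j) (hαβ : ∀ j, α j ≤ β j) (hβ : ∀ j, β j ≤ 1)
    (k : Fin d) (p q : ℕ) (hq : q ≠ 0) (hpq : p ≤ q) (hlen : β k - α k = p / q) :
    S (univ.pi fun j => Ioo (α j) (β j)) =
      ((p : ℝ≥0∞) / q) * S (univ.pi (Function.update (fun j => Ioo (α j) (β j)) k (Ioo 0 1))) := by
  set C : Fin d → Set ℝ := fun j => Ioo (α j) (β j) with hC
  set F : ℝ → ℝ → ℝ≥0∞ := fun u v => S (univ.pi (Function.update C k (Ioo u v))) with hF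
  have hqpos : (0:ℝ) < q := by positivity
  -- translation invariance for F
  have htrans : ∀ u v τ : ℝ, 0 ≤ u → u ≤ v → v ≤ 1 → 0 ≤ u + τ → v + τ ≤ 1 →
      F u v = F (u + τ) (v + τ) := by
    intro u v τ h1 h2 h3 h4 h5
    have key2 := shift S D hSae hequiv (Function.update α k u) (Function.update β k v)
      (fun j => if j = k then τ else 0)
      (fun j => by rcases eq_or_ne j k with rfl | hj
                   · simpa using h1
                   · simpa [Function.update_of_ne hj] using hα j)
      (fun j => by rcases eq_or_ne j k with rfl | hj
                   · simpa using h2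
                   · simpa [Function.update_of_ne hj] using hαβ j)
      (fun j => by rcases eq_or_ne j k with rfl | hj
                   · simpa using h3
                   · simpa [Function.update_of_ne hj] using hβ j)
      (fun j => by rcases eq_or_ne j k with rfl | hj
                   · simpa using h4
                   · simpa [Function.update_of_ne hj, hj] using hα j)
      (fun j => by rcases eq_or_ne j k with rfl | hj
                   · simpa using h5
                   · simpa [Function.update_of_ne hj, hj] using hβ j)
    show S (univ.pi (Function.update C k (Ioo u v))) =
      S (univ.pi (Function.update C k (Ioo (u + τ) (v + τ))))
    rw [hC, update_Ioo α β k u v, update_Ioo α β k (u + τ) (v + τ), key2]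
    congr 1
    apply Set.pi_congr rfl
    intro j _
    rcases eq_or_ne j k with rfl | hj
    · simp
    · simp [Function.update_of_ne hj, hj]
  -- additivity for F
  have hadd : ∀ u v w : ℝ, u ≤ v → v ≤ w → F u w = F u v + F v w := by
    intro u v w huv hvw
    have hmeas : ∀ X : Set ℝ, MeasurableSet X →
        MeasurableSet (univ.pi (Function.update C k X)) := by
      intro X hX
      refine MeasurableSet.univ_pi fun j => ?_
      rcases eq_or_ne j k with rfl | hj
      · simpa
      · rw [Function.update_of_ne hj]; exact measurableSet_Ioo
    have hmemupd : ∀ (X : Set ℝ) (s : Fin d → ℝ),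
        s ∈ univ.pi (Function.update C k X) ↔ (s k ∈ X ∧ ∀ j, j ≠ k → s j ∈ C j) := by
      intro X s
      simp only [mem_pi, mem_univ, true_implies]
      constructor
      · intro h
        refine ⟨by simpa using h k, fun j hj => by simpa [Function.update_of_ne hj] using h j⟩
      · rintro ⟨h1, h2⟩ j
        rcases eq_or_ne j k with rfl | hj
        · simpa
        · simpa [Function.update_of_ne hj] using h2 j hj
    have hdisj : Disjoint (univ.pi (Function.update C k (Ioo u v)))
        (univ.pi (Function.update C k (Ioo v w))) := by
      rw [Set.disjoint_left]
      intro s hs1 hs2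
      have h1 := ((hmemupd _ s).mp hs1).1
      have h2 := ((hmemupd _ s).mp hs2).1
      exact absurd h1.2 (not_lt.mpr (le_of_lt h2.1))
    have hsub1 : univ.pi (Function.update C k (Ioo u v)) ∪ univ.pi (Function.update C k (Ioo v w))
        ⊆ univ.pi (Function.update C k (Ioo u w)) := by
      rintro s (hs | hs) <;> rw [hmemupd] at hs ⊢ <;>
        exact ⟨⟨by linarith [hs.1.1, hs.1.2], by linarith [hs.1.1, hs.1.2]⟩, hs.2⟩
    have hsub2 : univ.pi (Function.update C k (Ioo u w)) ⊆
        univ.pi (Function.update C k (Ioo u v)) ∪ univ.pi (Function.update C k (Ioo v w))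
          ∪ {s | s k = v} := by
      intro s hs
      rw [hmemupd] at hs
      rcases lt_trichotomy (s k) v with h | h | h
      · exact Or.inl (Or.inl ((hmemupd _ s).mpr ⟨⟨hs.1.1, h⟩, hs.2⟩))
      · exact Or.inr h
      · exact Or.inl (Or.inr ((hmemupd _ s).mpr ⟨⟨h, hs.1.2⟩, hs.2⟩))
    have hunion : S (univ.pi (Function.update C k (Ioo u v)) ∪
        univ.pi (Function.update C k (Ioo v w))) =
        F u v + F v w := measure_union hdisj (hmeas _ measurableSet_Ioo)
    refine le_antisymm ?_ ?_
    · calc S (univ.pi (Function.update C k (Ioo u w)))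
          ≤ S (univ.pi (Function.update C k (Ioo u v)) ∪
              univ.pi (Function.update C k (Ioo v w)) ∪ {s | s k = v}) := measure_mono hsub2
        _ ≤ S (univ.pi (Function.update C k (Ioo u v)) ∪
              univ.pi (Function.update C k (Ioo v w))) + S {s | s k = v} := measure_union_le _ _
        _ = F u v + F v w := by rw [hslice k v, add_zero, hunion]
    · calc F u v + F v w
          = S (univ.pi (Function.update C k (Ioo u v)) ∪
              univ.pi (Function.update C k (Ioo v w))) := hunion.symm
        _ ≤ S (univ.pi (Function.update C k (Ioo u w))) := measure_mono hsub1
  -- F 0 0 = 0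
  have hzero : F 0 0 = 0 := by
    have hemp : univ.pi (Function.update C k (Ioo (0:ℝ) 0)) = ∅ := by
      rw [eq_empty_iff_forall_notMem]
      intro s hs
      have := hs k (mem_univ k)
      rw [Function.update_self] at this
      simp at this
    show S (univ.pi (Function.update C k (Ioo (0:ℝ) 0))) = 0
    rw [hemp]
    simp
  -- cells
  have hcell : ∀ j : ℕ, j + 1 ≤ q → F ((j:ℝ)/q) (((j:ℝ)+1)/q) = F 0 (1/q) := by
    intro j hj
    have hjq : (j:ℝ) + 1 ≤ q := by exact_mod_cast hj
    have hj0 : (0:ℝ) ≤ (j:ℝ)/q := by positivity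
    have h := htrans 0 (1/q) ((j:ℝ)/q) le_rfl (by positivity)
      (by rw [div_le_one hqpos]; exact_mod_cast Nat.one_le_iff_ne_zero.mpr hq)
      (by simpa using hj0)
      (by rw [← add_div, div_le_one hqpos]; linarith)
    have h2 : (0:ℝ) + (j:ℝ)/q = (j:ℝ)/q := by ring
    have h3 : 1/(q:ℝ) + (j:ℝ)/q = ((j:ℝ)+1)/q := by ring
    rw [h2, h3] at h
    exact h.symm
  -- multiples
  have hmul : ∀ j : ℕ, j ≤ q → F 0 ((j:ℝ)/q) = (j : ℝ≥0∞) * F 0 (1/q) := by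
    intro j
    induction j with
    | zero => intro _; simpa using hzero
    | succ n ih =>
      intro hn
      have hn' : n ≤ q := le_trans (Nat.le_succ n) hn
      have hle : (n:ℝ)/q ≤ ((n:ℝ)+1)/q := by gcongr; linarith
      have h0n : (0:ℝ) ≤ (n:ℝ)/q := by positivity
      have h1 : F 0 (((n:ℝ)+1)/q) = F 0 ((n:ℝ)/q) + F ((n:ℝ)/q) (((n:ℝ)+1)/q) :=
        hadd 0 ((n:ℝ)/q) (((n:ℝ)+1)/q) h0n hle
      have h2 := hcell n hn
      have h4 : ((n + 1 : ℕ) : ℝ) = (n:ℝ) + 1 := by push_cast; ring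
      rw [h4, h1, ih hn', h2]
      have h5 : ((n + 1 : ℕ) : ℝ≥0∞) = (n:ℝ≥0∞) + 1 := by push_cast; ring
      rw [h5, add_mul, one_mul]
  -- conclusion
  have hCk : Function.update C k (Ioo (α k) (β k)) = C := by
    have h : Ioo (α k) (β k) = C k := rfl
    rw [h, Function.update_eq_self]
  have hc1 : S (univ.pi fun j => Ioo (α j) (β j)) = F (α k) (β k) := by
    show _ = S (univ.pi (Function.update C k (Ioo (α k) (β k))))
    rw [hCk, hC]
  have hc2 : F (α k) (β k) = F 0 ((p:ℝ)/q) := by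
    have h := htrans (α k) (β k) (-(α k)) (hα k) (hαβ k) (hβ k)
      (by linarith [hα k]) (by linarith [hα k, hβ k])
    rw [h, show α k + -α k = (0:ℝ) by ring,
      show β k + -α k = (p:ℝ)/q by rw [← hlen]; ring]
  have hq1 : F 0 1 = (q:ℝ≥0∞) * F 0 (1/q) := by
    have h := hmul q le_rfl
    rwa [div_self (ne_of_gt hqpos)] at h
  have hp1 : F 0 ((p:ℝ)/q) = (p:ℝ≥0∞) * F 0 (1/q) := hmul p hpq
  have hS01 : S (univ.pi (Function.update C k (Ioo 0 1))) = F 0 1 := rfl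
  rw [hc1, hc2, hp1]
  rw [show (univ.pi (Function.update (fun j => Ioo (α j) (β j)) k (Ioo (0:ℝ) 1))) =
    (univ.pi (Function.update C k (Ioo (0:ℝ) 1))) from by rw [hC]]
  rw [hS01, hq1, ← mul_assoc,
    ENNReal.div_mul_cancel (by exact_mod_cast hq) (ENNReal.natCast_ne_top q)]

end Scale

section Prod

variable {d : ℕ}

lemma box_prod (S D : Measure (Fin d → ℝ)) [IsProbabilityMeasure S]
    (hSae : ∀ᵐ s ∂S, ∀ i, s i ∈ Ioo (0:ℝ) 1)
    (hslice : ∀ (i : Fin d) (c : ℝ), S {s | s i = c} = 0)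
    (hequiv : ∀ x : Fin d → ℝ, (∀ i, x i ∈ Icc (0:ℝ) 1) →
      S.map (fun s => fun i => (s i + (if s i < x i then (1:ℝ) else 0)) / 2) =
        D.map (fun e => fun i => (x i + e i) / 2 + 1/4))
    (α β : Fin d → ℝ) (hα : ∀ j, 0 ≤ α j) (hαβ : ∀ j, α j ≤ β j) (hβ : ∀ j, β j ≤ 1)
    (hrat : ∀ j, ∃ p q : ℕ, q ≠ 0 ∧ p ≤ q ∧ β j - α j = p / q) :
    S (univ.pi fun j => Ioo (α j) (β j)) = ∏ j, ENNReal.ofReal (β j - α j) := by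
  classical
  have hS1 : S (univ.pi fun _ : Fin d => Ioo (0:ℝ) 1) = 1 := by
    have hae : (univ.pi fun _ : Fin d => Ioo (0:ℝ) 1) =ᵐ[S] (univ : Set (Fin d → ℝ)) := by
      filter_upwards [hSae] with s hs
      refine eq_iff_iff.mpr ?_
      constructor
      · intro _; exact mem_univ s
      · intro _; exact fun i _ => hs i
    rw [measure_congr hae, measure_univ]
  have main : ∀ T : Finset (Fin d),
      S (univ.pi fun j => if j ∈ T then Ioo (α j) (β j) else Ioo (0:ℝ) 1) =
        ∏ j ∈ T, ENNReal.ofReal (β j - α j) := by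
    intro T
    induction T using Finset.induction_on with
    | empty => simpa using hS1
    | @insert k T hk ih =>
      obtain ⟨p, q, hq, hpq, hlen⟩ := hrat k
      set α' : Fin d → ℝ := fun j => if j ∈ T then α j else 0 with hα'
      set β' : Fin d → ℝ := fun j => if j ∈ T then β j else 1 with hβ'
      set α'' : Fin d → ℝ := Function.update α' k (α k) with hα''
      set β'' : Fin d → ℝ := Function.update β' k (β k) with hβ''
      have hc1 : (fun j => if j ∈ insert k T then Ioo (α j) (β j) else Ioo (0:ℝ) 1) =
          fun j => Ioo (α'' j) (β'' j) := by
        funext j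
        rcases eq_or_ne j k with rfl | hj
        · simp [hα'', hβ'']
        · rw [hα'', hβ'', Function.update_of_ne hj, Function.update_of_ne hj, hα', hβ']
          by_cases hT : j ∈ T
          · simp [hT, Finset.mem_insert, hj]
          · simp [hT, Finset.mem_insert, hj]
      have hc2 : Function.update (fun j => Ioo (α'' j) (β'' j)) k (Ioo (0:ℝ) 1) =
          fun j => if j ∈ T then Ioo (α j) (β j) else Ioo (0:ℝ) 1 := by
        funext j
        rcases eq_or_ne j k with rfl | hj
        · simp [Function.update_self, hk]
        · rw [Function.update_of_ne hj, hα'', hβ'', Function.update_of_ne hj,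
            Function.update_of_ne hj, hα', hβ']
          by_cases hT : j ∈ T <;> simp [hT]
      have hb1 : ∀ j, 0 ≤ α'' j := by
        intro j
        rcases eq_or_ne j k with rfl | hj
        · simpa [hα''] using hα j
        · rw [hα'', Function.update_of_ne hj, hα']
          by_cases hT : j ∈ T <;> simp [hT, hα j]
      have hb2 : ∀ j, α'' j ≤ β'' j := by
        intro j
        rcases eq_or_ne j k with rfl | hj
        · simpa [hα'', hβ''] using hαβ j
        · rw [hα'', hβ'', Function.update_of_ne hj, Function.update_of_ne hj, hα', hβ']
          by_cases hT : j ∈ T <;> simp [hT, hαβ j]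
      have hb3 : ∀ j, β'' j ≤ 1 := by
        intro j
        rcases eq_or_ne j k with rfl | hj
        · simpa [hβ''] using hβ j
        · rw [hβ'', Function.update_of_ne hj, hβ']
          by_cases hT : j ∈ T <;> simp [hT, hβ j]
      have hlen'' : β'' k - α'' k = p / q := by
        rw [hα'', hβ'']
        simpa using hlen
      have hsc := scale_coord S D hSae hslice hequiv α'' β'' hb1 hb2 hb3 k p q hq hpq hlen''
      rw [hc1, hsc, hc2, ih, Finset.prod_insert hk]
      congr 1
      rw [hlen, ENNReal.ofReal_div_of_pos (by positivity), ENNReal.ofReal_natCast,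
        ENNReal.ofReal_natCast]
  have hfin := main Finset.univ
  simpa using hfin

end Prod

section Clip

lemma clip_sub (lo hi a b : ℝ) :
    Ioo (min (max a lo) hi) (min (max b lo) hi) ⊆ Ioo a b ∩ Icc lo hi := by
  intro x hx
  obtain ⟨h1, h2⟩ := hx
  have hlo : lo ≤ x := by
    rcases le_or_gt lo hi with hlh | hlh
    · have : lo ≤ min (max a lo) hi := le_min (le_max_right a lo) hlh
      linarith
    · exfalso
      have ha' : min (max a lo) hi = hi :=
        min_eq_right (le_of_lt (lt_of_lt_of_le hlh (le_max_right a lo)))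
      have hb' : min (max b lo) hi = hi :=
        min_eq_right (le_of_lt (lt_of_lt_of_le hlh (le_max_right b lo)))
      rw [ha'] at h1; rw [hb'] at h2
      linarith
  have hhi : x ≤ hi := le_of_lt (lt_of_lt_of_le h2 (min_le_right _ _))
  refine ⟨⟨?_, ?_⟩, hlo, hhi⟩
  · rcases le_or_gt a hi with h | h
    · have : a ≤ min (max a lo) hi := le_min (le_max_left a lo) h
      linarith
    · exfalso
      have : min (max a lo) hi = hi := min_eq_right (le_of_lt (lt_of_lt_of_le h (le_max_left a lo)))
      rw [this] at h1
      linarith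
  · rcases le_or_gt lo b with h | h
    · have : min (max b lo) hi ≤ b := le_trans (min_le_left _ _) (le_of_eq (max_eq_left h))
      linarith
    · exfalso
      have hbl : max b lo = lo := max_eq_right (le_of_lt h)
      have : min (max b lo) hi ≤ lo := by rw [hbl]; exact min_le_left _ _
      have hx0 : x < lo := lt_of_lt_of_le h2 this
      linarith

lemma clip_sup (lo hi a b : ℝ) :
    Ioo a b ∩ Icc lo hi ⊆
      Ioo (min (max a lo) hi) (min (max b lo) hi) ∪ {lo, hi} := by
  intro x hx
  obtain ⟨⟨h1, h2⟩, h3, h4⟩ := hx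
  by_cases e1 : x = lo
  · exact Or.inr (Or.inl e1)
  by_cases e2 : x = hi
  · exact Or.inr (Or.inr e2)
  have hlo : lo < x := lt_of_le_of_ne h3 (Ne.symm e1)
  have hhi : x < hi := lt_of_le_of_ne h4 e2
  refine Or.inl ⟨?_, ?_⟩
  · exact lt_of_le_of_lt (min_le_left _ _) (max_lt h1 hlo)
  · exact lt_min (lt_of_lt_of_le h2 (le_max_left b lo)) hhi

lemma clip_mem_iff (lo hi a b x : ℝ) (hx : x ∈ Ioo lo hi) :
    x ∈ Ioo a b ↔ x ∈ Ioo (min (max a lo) hi) (min (max b lo) hi) := by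
  constructor
  · intro h
    have := clip_sup lo hi a b ⟨h, le_of_lt hx.1, le_of_lt hx.2⟩
    rcases this with h' | h' | h'
    · exact h'
    · exact absurd h' (ne_of_gt hx.1)
    · exact absurd h' (ne_of_lt hx.2)
  · intro h
    exact (clip_sub lo hi a b h).1

lemma clip_vol (lo hi a b : ℝ) :
    volume (Ioo a b ∩ Icc lo hi) =
      ENNReal.ofReal (min (max b lo) hi - min (max a lo) hi) := by
  have hpair : volume ({lo, hi} : Set ℝ) = 0 := by
    rw [show ({lo, hi} : Set ℝ) = {lo} ∪ {hi} from Set.insert_eq lo {hi}]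
    refine le_antisymm (le_trans (measure_union_le _ _) ?_) (by simp)
    simp [Real.volume_singleton]
  refine le_antisymm ?_ ?_
  · calc volume (Ioo a b ∩ Icc lo hi)
        ≤ volume (Ioo (min (max a lo) hi) (min (max b lo) hi) ∪ {lo, hi}) :=
          measure_mono (clip_sup lo hi a b)
      _ ≤ volume (Ioo (min (max a lo) hi) (min (max b lo) hi)) + volume ({lo, hi} : Set ℝ) :=
          measure_union_le _ _
      _ = ENNReal.ofReal (min (max b lo) hi - min (max a lo) hi) := by
          rw [hpair, add_zero, Real.volume_Ioo]
  · calc ENNReal.ofReal (min (max b lo) hi - min (max a lo) hi)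
        = volume (Ioo (min (max a lo) hi) (min (max b lo) hi)) := (Real.volume_Ioo).symm
      _ ≤ volume (Ioo a b ∩ Icc lo hi) := measure_mono (clip_sub lo hi a b)

lemma rat_frac (t : ℚ) (h0 : 0 ≤ t) (h1 : t ≤ 1) :
    ∃ p q : ℕ, q ≠ 0 ∧ p ≤ q ∧ (t : ℝ) = p / q := by
  refine ⟨t.num.toNat, t.den, t.den_nz, ?_, ?_⟩
  · have hden : (0:ℝ) < (t.den : ℝ) := by exact_mod_cast t.pos
    have hnum : (t.num.toNat : ℝ) = (t.num : ℝ) := by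
      exact_mod_cast Int.toNat_of_nonneg (Rat.num_nonneg.mpr h0)
    have hc : (t : ℝ) = (t.num : ℝ) / (t.den : ℝ) := by
      rw [Rat.cast_def]
    have ht1 : (t : ℝ) ≤ 1 := by exact_mod_cast h1
    have : (t.num.toNat : ℝ) ≤ (t.den : ℝ) := by
      rw [hnum]
      have : (t.num : ℝ) = (t : ℝ) * (t.den : ℝ) := by
        rw [hc]; field_simp
      rw [this]
      nlinarith
    exact_mod_cast this
  · have hden : (0:ℝ) < (t.den : ℝ) := by exact_mod_cast t.pos
    have hnum : (t.num.toNat : ℝ) = (t.num : ℝ) := by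
      exact_mod_cast Int.toNat_of_nonneg (Rat.num_nonneg.mpr h0)
    rw [Rat.cast_def, hnum]

end Clip

section Assemble

variable {d : ℕ}

lemma S_part (S D : Measure (Fin d → ℝ)) [IsProbabilityMeasure S]
    (hSae : ∀ᵐ s ∂S, ∀ i, s i ∈ Ioo (0:ℝ) 1)
    (hslice : ∀ (i : Fin d) (c : ℝ), S {s | s i = c} = 0)
    (hequiv : ∀ x : Fin d → ℝ, (∀ i, x i ∈ Icc (0:ℝ) 1) →
      S.map (fun s => fun i => (s i + (if s i < x i then (1:ℝ) else 0)) / 2) =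
        D.map (fun e => fun i => (x i + e i) / 2 + 1/4)) :
    S = Measure.pi (fun _ : Fin d => unif 0 1) := by
  refine (Measure.pi_eq_generateFrom (fun _ => Real.borel_eq_generateFrom_Ioo_rat.symm)
    (fun _ => Real.isPiSystem_Ioo_rat) (fun _ => Real.finiteSpanningSetsInIooRat _) ?_).symm
  intro s hs
  have h' : ∀ i, ∃ a b : ℚ, a < b ∧ s i = Ioo (a:ℝ) (b:ℝ) := by
    intro i
    have h := hs i
    simp only [mem_iUnion, mem_singleton_iff] at h
    obtain ⟨a, b, hab, h⟩ := h
    exact ⟨a, b, hab, h⟩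
  choose a b hab hseq using h'
  set α : Fin d → ℝ := fun j => min (max ((a j : ℝ)) 0) 1 with hαdef
  set β : Fin d → ℝ := fun j => min (max ((b j : ℝ)) 0) 1 with hβdef
  have hα : ∀ j, 0 ≤ α j := fun j => le_min (le_max_right _ _) zero_le_one
  have hαβ : ∀ j, α j ≤ β j := fun j =>
    min_le_min (max_le_max (by exact_mod_cast le_of_lt (hab j)) le_rfl) le_rfl
  have hβ : ∀ j, β j ≤ 1 := fun j => min_le_right _ _
  have hrat : ∀ j, ∃ p q : ℕ, q ≠ 0 ∧ p ≤ q ∧ β j - α j = p / q := by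
    intro j
    set t : ℚ := min (max (b j) 0) 1 - min (max (a j) 0) 1 with ht
    have h0 : 0 ≤ t := by
      rw [ht]
      have : min (max (a j) 0) 1 ≤ min (max (b j) 0) 1 :=
        min_le_min (max_le_max (le_of_lt (hab j)) le_rfl) le_rfl
      linarith
    have h1 : t ≤ 1 := by
      rw [ht]
      have h2 : min (max (b j) 0) 1 ≤ 1 := min_le_right _ _
      have h3 : (0:ℚ) ≤ min (max (a j) 0) 1 := le_min (le_max_right _ _) zero_le_one
      linarith
    obtain ⟨p, q, hq, hpq, heq⟩ := rat_frac t h0 h1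
    refine ⟨p, q, hq, hpq, ?_⟩
    rw [← heq, ht]
    push_cast
    rw [hαdef, hβdef]
  have hbox := box_prod S D hSae hslice hequiv α β hα hαβ hβ hrat
  have hcong : S (Set.pi univ s) = S (univ.pi fun j => Ioo (α j) (β j)) := by
    refine measure_congr ?_
    filter_upwards [hSae] with z hz
    refine eq_iff_iff.mpr ?_
    constructor
    · intro h j _
      have hj := h j (mem_univ j)
      rw [hseq j] at hj
      exact (clip_mem_iff 0 1 ((a j : ℝ)) ((b j : ℝ)) (z j) (hz j)).mp hj
    · intro h j _
      have hj := h j (mem_univ j)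
      rw [hseq j]
      exact (clip_mem_iff 0 1 ((a j : ℝ)) ((b j : ℝ)) (z j) (hz j)).mpr hj
  have huj : ∀ j, unif 0 1 (s j) = ENNReal.ofReal (β j - α j) := by
    intro j
    rw [hseq j, unif_apply, clip_vol 0 1]
    norm_num
    rfl
  rw [hcong, hbox]
  exact Finset.prod_congr rfl (fun j _ => (huj j).symm)

lemma D_part (S D : Measure (Fin d → ℝ)) [IsProbabilityMeasure S]
    (hSae : ∀ᵐ s ∂S, ∀ i, s i ∈ Ioo (0:ℝ) 1)
    (hDae : ∀ᵐ e ∂D, ∀ i, e i ∈ Ioo (-(1/2):ℝ) (1/2))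
    (hslice : ∀ (i : Fin d) (c : ℝ), S {s | s i = c} = 0)
    (hequiv : ∀ x : Fin d → ℝ, (∀ i, x i ∈ Icc (0:ℝ) 1) →
      S.map (fun s => fun i => (s i + (if s i < x i then (1:ℝ) else 0)) / 2) =
        D.map (fun e => fun i => (x i + e i) / 2 + 1/4)) :
    D = Measure.pi (fun _ : Fin d => unif (-(1/2)) (1/2)) := by
  refine (Measure.pi_eq_generateFrom (fun _ => Real.borel_eq_generateFrom_Ioo_rat.symm)
    (fun _ => Real.isPiSystem_Ioo_rat) (fun _ => Real.finiteSpanningSetsInIooRat _) ?_).symm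
  intro s hs
  have h' : ∀ i, ∃ a b : ℚ, a < b ∧ s i = Ioo (a:ℝ) (b:ℝ) := by
    intro i
    have h := hs i
    simp only [mem_iUnion, mem_singleton_iff] at h
    obtain ⟨a, b, hab, h⟩ := h
    exact ⟨a, b, hab, h⟩
  choose a b hab hseq using h'
  set α : Fin d → ℝ := fun j => min (max ((a j : ℝ)) (-(1/2))) (1/2) with hαdef
  set β : Fin d → ℝ := fun j => min (max ((b j : ℝ)) (-(1/2))) (1/2) with hβdef
  have hα : ∀ j, -(1/2) ≤ α j := fun j => le_min (le_max_right _ _) (by norm_num)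
  have hαβ : ∀ j, α j ≤ β j := fun j =>
    min_le_min (max_le_max (by exact_mod_cast le_of_lt (hab j)) le_rfl) le_rfl
  have hβ : ∀ j, β j ≤ 1/2 := fun j => min_le_right _ _
  -- lengths are rational
  have hrat : ∀ j, ∃ p q : ℕ, q ≠ 0 ∧ p ≤ q ∧ β j - α j = p / q := by
    intro j
    set t : ℚ := min (max (b j) (-(1/2))) (1/2) - min (max (a j) (-(1/2))) (1/2) with ht
    have h0 : 0 ≤ t := by
      rw [ht]
      have : min (max (a j) (-(1/2))) (1/2:ℚ) ≤ min (max (b j) (-(1/2))) (1/2) :=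
        min_le_min (max_le_max (le_of_lt (hab j)) le_rfl) le_rfl
      linarith
    have h1 : t ≤ 1 := by
      rw [ht]
      have h2 : min (max (b j) (-(1/2))) (1/2:ℚ) ≤ 1/2 := min_le_right _ _
      have h3 : (-(1/2):ℚ) ≤ min (max (a j) (-(1/2))) (1/2) := le_min (le_max_right _ _) (by norm_num)
      linarith
    obtain ⟨p, q, hq, hpq, heq⟩ := rat_frac t h0 h1
    refine ⟨p, q, hq, hpq, ?_⟩
    rw [← heq, ht]
    push_cast
    rw [hαdef, hβdef]
  -- from D-box to S-box
  have hkey := key S D hSae hequiv (fun j => α j + 1/2) (fun j => β j + 1/2) (fun _ => 0)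
    (fun j => by have := hα j; linarith)
    (fun j => by have := hαβ j; linarith)
    (fun j => by have := hβ j; linarith)
    (fun j => by have := hα j; linarith)
    (fun j => by have := hβ j; linarith)
  have hsimp : (fun i => Ioo (α i + 1/2 + (fun _ : Fin d => (0:ℝ)) i - 1/2)
      (β i + 1/2 + (fun _ : Fin d => (0:ℝ)) i - 1/2)) = fun i => Ioo (α i) (β i) := by
    funext i
    congr 1 <;> · dsimp; ring
  rw [hsimp] at hkey
  have hbox := box_prod S D hSae hslice hequiv (fun j => α j + 1/2) (fun j => β j + 1/2)
    (fun j => by have := hα j; linarith)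
    (fun j => by have := hαβ j; linarith)
    (fun j => by have := hβ j; linarith)
    (fun j => by obtain ⟨p, q, hq, hpq, heq⟩ := hrat j
                 exact ⟨p, q, hq, hpq, by linarith⟩)
  have hcong : D (Set.pi univ s) = D (univ.pi fun j => Ioo (α j) (β j)) := by
    refine measure_congr ?_
    filter_upwards [hDae] with z hz
    refine eq_iff_iff.mpr ?_
    constructor
    · intro h j _
      have hj := h j (mem_univ j)
      rw [hseq j] at hj
      exact (clip_mem_iff (-(1/2)) (1/2) ((a j : ℝ)) ((b j : ℝ)) (z j) (hz j)).mp hj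
    · intro h j _
      have hj := h j (mem_univ j)
      rw [hseq j]
      exact (clip_mem_iff (-(1/2)) (1/2) ((a j : ℝ)) ((b j : ℝ)) (z j) (hz j)).mpr hj
  have huj : ∀ j, unif (-(1/2)) (1/2) (s j) = ENNReal.ofReal (β j - α j) := by
    intro j
    rw [hseq j, unif_apply, clip_vol (-(1/2)) (1/2)]
    norm_num
    rfl
  rw [hcong, ← hkey, hbox]
  refine Finset.prod_congr rfl (fun j _ => ?_)
  rw [huj j]
  congr 1
  ring

end Assemble

/-- At `λ = 1/2`, the only pair of joint noise distributions `(S, D)` — with uniform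
marginals on `[0,1]` resp. `[-1/2,1/2]` — for which the SSN output `x̃` always has the same
distribution as `(x+ε)/2 + 𝟙/4`, is the pair of fully independent product distributions. -/
theorem equivalent_joint_distributions_unique (d : ℕ) (hd : 1 ≤ d)
    (S : Measure (Fin d → ℝ)) [IsProbabilityMeasure S]
    (D : Measure (Fin d → ℝ)) [IsProbabilityMeasure D]
    (hSmarg : ∀ i, S.map (fun s => s i) = unif 0 1)
    (hDmarg : ∀ i, D.map (fun e => e i) = unif (-(1/2)) (1/2))
    (hequiv : ∀ x : Fin d → ℝ, (∀ i, x i ∈ Icc (0:ℝ) 1) →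
      S.map (fun s => fun i => (s i + (if s i < x i then (1:ℝ) else 0)) / 2) =
        D.map (fun e => fun i => (x i + e i) / 2 + 1/4)) :
    S = Measure.pi (fun _ : Fin d => unif 0 1) ∧
      D = Measure.pi (fun _ : Fin d => unif (-(1/2)) (1/2)) := by
  have hSae := ae_mem_Ioo S 0 1 zero_le_one hSmarg
  have hDae := ae_mem_Ioo D (-(1/2)) (1/2) (by norm_num) hDmarg
  have hslice := slice_null S 0 1 hSmarg
  exact ⟨S_part S D hSae hslice hequiv, D_part S D hSae hDae hslice hequiv⟩
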